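/- Let M be a locally right Garside monoid and A ⊆ M containing 1 and closed under left lcm. Then for every x ∈ M there exists a unique right divisor x₁ of x lying in A that is maximal with respect to right divisibility (every right divisor of x lying in A is a right divisor of x₁); this x₁ is called the A-tail of x. -/
import Mathlib


/-- `y` right-divides `x`, i.e. `x` is a left multiple of `y`. -/
def RDiv {M : Type*} [Monoid M] (x y : M) : Prop := ∃ z, x = z * y

/-- `z` is a left lcm of `a` and `b`: it is a common left multiple of `a` and `b`, and
every common left multiple of `a` and `b` is a left multiple of `z`. -/
def IsLeftLcm {M : Type*} [Monoid M] (z a b : M) : Prop :=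
  RDiv z a ∧ RDiv z b ∧ ∀ w, RDiv w a → RDiv w b → RDiv w z

/-- A monoid is locally right Garside if it is right cancellative, any two elements
admitting a common left multiple admit a left lcm, and, for every `x`, there is no
infinite strictly increasing chain of right divisors of `x`. -/
structure LocallyRightGarside (M : Type*) [Monoid M] : Prop where
  rightCancel : ∀ x y z : M, x * z = y * z → x = y
  lcm : ∀ a b : M, (∃ w, RDiv w a ∧ RDiv w b) → ∃ z, IsLeftLcm z a b
  noChain : ∀ x : M, ¬ ∃ f : ℕ → M,
      (∀ k, RDiv x (f k)) ∧ (∀ k, ∃ w, w ≠ 1 ∧ f (k + 1) = w * f k)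

/-- `t` is the `A`-tail of `x`: a right divisor of `x` lying in `A` which is maximal
with respect to right divisibility. -/
def IsTail {M : Type*} [Monoid M] (A : Set M) (x t : M) : Prop :=
  t ∈ A ∧ RDiv x t ∧ ∀ a ∈ A, RDiv x a → RDiv t a

/-- A submonoid is closed if it is closed under left lcm and under left divisor. -/
def ClosedSubmonoid {M : Type*} [Monoid M] (M₁ : Submonoid M) : Prop :=
  (∀ a ∈ M₁, ∀ b ∈ M₁, ∀ z : M, IsLeftLcm z a b → z ∈ M₁) ∧
  (∀ a ∈ M₁, ∀ y z : M, a = y * z → y ∈ M₁)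

/-- In a locally right Garside monoid, if `A` contains `1` and is closed
under left lcm, then every `x` admits a unique maximal right divisor lying in `A`
(the `A`-tail of `x`). -/
theorem existsUnique_tail {M : Type*} [Monoid M]
    (h : LocallyRightGarside M) (A : Set M) (hone : (1 : M) ∈ A)
    (hclosed : ∀ a ∈ A, ∀ b ∈ A, (∃ w : M, RDiv w a ∧ RDiv w b) →
        ∃ z ∈ A, IsLeftLcm z a b)
    (x : M) :
    ∃! t : M, IsTail A x t := by
  -- no nontrivial units
  have hunit : ∀ u v : M, u * v = 1 → v * u = 1 → u = 1 := by
    intro u v huv hvu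
    by_contra hu
    apply h.noChain 1
    refine ⟨fun k => u ^ k, fun k => ⟨v ^ k, ?_⟩, fun k => ⟨u, hu, by show u ^ (k+1) = u * u ^ k; rw [pow_succ']⟩⟩
    induction k with
    | zero => simp
    | succ n ih =>
      show (1 : M) = v ^ (n + 1) * u ^ (n + 1)
      simp only at ih
      rw [pow_succ' v, pow_succ u, mul_assoc, ← mul_assoc (v ^ n), ← ih, one_mul, hvu]
  -- existence
  have hex : ∃ t, IsTail A x t := by
    by_contra hno
    have step : ∀ t : M, t ∈ A → RDiv x t →
        ∃ t', t' ∈ A ∧ RDiv x t' ∧ ∃ w, w ≠ 1 ∧ t' = w * t := by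
      intro t htA htx
      have hnt : ¬ IsTail A x t := fun ht => hno ⟨t, ht⟩
      simp only [IsTail, not_and, not_forall] at hnt
      obtain ⟨a, haA, hax, hta⟩ := hnt htA htx
      obtain ⟨z, hzA, hz⟩ := hclosed t htA a haA ⟨x, htx, hax⟩
      obtain ⟨w, hw⟩ := hz.1
      refine ⟨z, hzA, hz.2.2 x htx hax, w, ?_, hw⟩
      intro hw1
      apply hta
      rw [hw1, one_mul] at hw
      exact hw ▸ hz.2.1
    choose g hg1 hg2 hg3 using step
    set f : ℕ → {t : M // t ∈ A ∧ RDiv x t} := fun n =>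
      Nat.rec ⟨1, hone, x, (mul_one x).symm⟩
        (fun _ p => ⟨g p.1 p.2.1 p.2.2, hg1 p.1 p.2.1 p.2.2, hg2 p.1 p.2.1 p.2.2⟩) n
      with hf
    exact h.noChain x ⟨fun k => (f k).1, fun k => (f k).2.2,
      fun k => hg3 (f k).1 (f k).2.1 (f k).2.2⟩
  obtain ⟨t, ht⟩ := hex
  refine ⟨t, ht, fun s hs => ?_⟩
  obtain ⟨u, hu⟩ := ht.2.2 s hs.1 hs.2.1
  obtain ⟨v, hv⟩ := hs.2.2 t ht.1 ht.2.1
  have huv : u * v = 1 := by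
    apply h.rightCancel _ _ t
    rw [one_mul, mul_assoc, ← hv, ← hu]
  have hvu : v * u = 1 := by
    apply h.rightCancel _ _ s
    rw [one_mul, mul_assoc, ← hu, ← hv]
  have : u = 1 := hunit u v huv hvu
  rw [hu, this, one_mul]
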